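/- Let T be a localisable monad on a symmetric monoidal category C and let u ≤ v be central idempotents with u = v ∘ m. Then the restriction functor C|_{u≤v} : C|v → C|u together with the natural transformation φ_A = T(A) ⊗ u : T(A) ⊗ U → T(A) (a morphism T|u(C|_{u≤v} A) → C|_{u≤v}(T|v A) in C|u) is a lax monad morphism from T|v to T|u, i.e. φ is natural and compatible with the units and multiplications of T|v and T|u. -/

import Mathlib

open CategoryTheory MonoidalCategory

variable {C : Type*} [Category C] [MonoidalCategory C]

/-- The multiplication map `U ⊗ U ⟶ U` associated to a candidate central idempotent
`u : U ⟶ I`; `u` is a central idempotent when this map agrees with `λ_U ∘ (u ▷ U)` and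
is invertible. -/
abbrev ciMap {U : C} (u : U ⟶ 𝟙_ C) : U ⊗ U ⟶ U :=
  U ◁ u ≫ (ρ_ U).hom

/-- The identity morphism on `A` in the restricted category `C|u`: the morphism
`A ⊗ u : A ⊗ U ⟶ A` (composed with the right unitor). -/
def restrictId {U : C} (u : U ⟶ 𝟙_ C) (A : C) : A ⊗ U ⟶ A :=
  A ◁ u ≫ (ρ_ A).hom

/-- Composition in the restricted category `C|u`: given `f : A ⊗ U ⟶ B` and
`g : B ⊗ U ⟶ D`, their composite is `g ∘ (f ⊗ U) ∘ (A ⊗ (U ⊗ u))⁻¹`. -/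
noncomputable def restrictComp {U : C} (u : U ⟶ 𝟙_ C) [IsIso (ciMap u)] {A B D : C}
    (f : A ⊗ U ⟶ B) (g : B ⊗ U ⟶ D) : A ⊗ U ⟶ D :=
  A ◁ inv (ciMap u) ≫ (α_ A U U).inv ≫ f ▷ U ≫ g

/-- A central idempotent in a monoidal category. -/
def IsCentralIdempotent {U : C} (u : U ⟶ 𝟙_ C) : Prop :=
  (U ◁ u ≫ (ρ_ U).hom = u ▷ U ≫ (λ_ U).hom) ∧ IsIso (U ◁ u ≫ (ρ_ U).hom)

variable (T : Monad C)

/-- The action on morphisms of the restricted monad `T|u` on `C|u`: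
a morphism `f : A ⊗ U ⟶ B` of `C|u` is sent to `T(f) ∘ str_{A,U}`. -/
def TuMap (str : ∀ (A : C) {U' : C}, (U' ⟶ 𝟙_ C) → (T.obj A ⊗ U' ⟶ T.obj (A ⊗ U')))
    {U : C} (u : U ⟶ 𝟙_ C) {A B : C} (f : A ⊗ U ⟶ B) : T.obj A ⊗ U ⟶ T.obj B :=
  str A u ≫ T.map f

/-- The unit of the restricted monad `T|u`: the morphism `η_A ⊗ u`. -/
def etaU {U : C} (u : U ⟶ 𝟙_ C) (A : C) : A ⊗ U ⟶ T.obj A :=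
  (T.η.app A ⊗ₘ u) ≫ (ρ_ (T.obj A)).hom

/-- The multiplication of the restricted monad `T|u`: the morphism `μ_A ⊗ u`. -/
def muU {U : C} (u : U ⟶ 𝟙_ C) (A : C) : T.obj (T.obj A) ⊗ U ⟶ T.obj A :=
  (T.μ.app A ⊗ₘ u) ≫ (ρ_ (T.obj A)).hom


lemma key {U : C} (u : U ⟶ 𝟙_ C) (A : C) :
    (α_ A U U).inv ≫ (A ⊗ U) ◁ u ≫ (ρ_ (A ⊗ U)).hom = A ◁ ciMap u := by
  rw [← associator_inv_naturality_right_assoc]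
  simp only [ciMap, MonoidalCategory.whiskerLeft_comp]
  congr 1
  monoidal

lemma comp_id_right {U : C} (u : U ⟶ 𝟙_ C) [IsIso (ciMap u)] {A X : C}
    (f : A ⊗ U ⟶ X) : restrictComp u f (restrictId u X) = f := by
  unfold restrictComp restrictId
  rw [← whisker_exchange_assoc, rightUnitor_naturality, reassoc_of% key u A,
    ← MonoidalCategory.whiskerLeft_comp_assoc, IsIso.inv_hom_id,
    MonoidalCategory.whiskerLeft_id, Category.id_comp]

lemma comp_id_left {U : C} (u : U ⟶ 𝟙_ C) [IsIso (ciMap u)]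
    (hcu : U ◁ u ≫ (ρ_ U).hom = u ▷ U ≫ (λ_ U).hom) {A X : C}
    (g : A ⊗ U ⟶ X) : restrictComp u (restrictId u A) g = g := by
  unfold restrictComp restrictId
  have h : (α_ A U U).inv ≫ (A ◁ u ≫ (ρ_ A).hom) ▷ U = A ◁ (u ▷ U ≫ (λ_ U).hom) := by
    simp only [MonoidalCategory.comp_whiskerRight, MonoidalCategory.whiskerLeft_comp]
    rw [← associator_inv_naturality_middle_assoc]
    congr 1
    monoidal
  rw [reassoc_of% h, ← hcu, ← MonoidalCategory.whiskerLeft_comp_assoc, IsIso.inv_hom_id,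
    MonoidalCategory.whiskerLeft_id, Category.id_comp]

/-- Let `T` be a localisable monad on a symmetric monoidal category `C` and `u ≤ v`
central idempotents with `u = v ∘ m`. Then the restriction functor `C|_{u≤v} : C|v ⥤ C|u`
(identity on objects, `f ↦ f ∘ (A ⊗ m)` on morphisms), together with
`φ_A = T(A) ⊗ u : T(A) ⊗ U ⟶ T(A)`, is a lax monad morphism `T|v ⟶ T|u`:
`φ` is natural and compatible with the units and multiplications. -/
theorem restrict_lax_monad_morphism {C : Type*} [Category C] [MonoidalCategory C]
    [SymmetricCategory C] (T : Monad C)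
    (str : ∀ (A : C) {U' : C}, (U' ⟶ 𝟙_ C) → (T.obj A ⊗ U' ⟶ T.obj (A ⊗ U')))
    -- axioms of a localisable monad
    (h1 : ∀ A : C, str A (𝟙 (𝟙_ C)) ≫ T.map (ρ_ A).hom = (ρ_ (T.obj A)).hom)
    (h2 : ∀ {U' V' : C} (u' : U' ⟶ 𝟙_ C) (v' : V' ⟶ 𝟙_ C), IsCentralIdempotent u' →
      IsCentralIdempotent v' → ∀ A : C,
      str A ((u' ⊗ₘ v') ≫ (λ_ (𝟙_ C)).hom) ≫ T.map (α_ A U' V').inv =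
        (α_ (T.obj A) U' V').inv ≫ str A u' ▷ V' ≫ str (A ⊗ U') v')
    (h3 : ∀ {U' : C} (u' : U' ⟶ 𝟙_ C), IsCentralIdempotent u' → ∀ A : C,
      T.η.app (A ⊗ U') = T.η.app A ▷ U' ≫ str A u')
    (h4 : ∀ {U' : C} (u' : U' ⟶ 𝟙_ C), IsCentralIdempotent u' → ∀ A : C,
      str (T.obj A) u' ≫ T.map (str A u') ≫ T.μ.app (A ⊗ U') = T.μ.app A ▷ U' ≫ str A u')
    (h5 : ∀ {U' V' : C} (u' : U' ⟶ 𝟙_ C) (v' : V' ⟶ 𝟙_ C) (m : U' ⟶ V'),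
      IsCentralIdempotent u' → IsCentralIdempotent v' → u' = m ≫ v' → ∀ A : C,
      T.obj A ◁ m ≫ str A v' = str A u' ≫ T.map (A ◁ m))
    (h6 : ∀ {U' : C} (u' : U' ⟶ 𝟙_ C), IsCentralIdempotent u' → ∀ {A B : C} (f : A ⟶ B),
      T.map f ▷ U' ≫ str B u' = str A u' ≫ T.map (f ▷ U'))
    -- central idempotents u ≤ v with u = v ∘ m
    {U V : C} (u : U ⟶ 𝟙_ C) (v : V ⟶ 𝟙_ C) (m : U ⟶ V) (hm : u = m ≫ v)
    (hcu : U ◁ u ≫ (ρ_ U).hom = u ▷ U ≫ (λ_ U).hom) [IsIso (ciMap u)]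
    (hcv : V ◁ v ≫ (ρ_ V).hom = v ▷ V ≫ (λ_ V).hom) [IsIso (ciMap v)] :
    -- φ is natural: for every morphism f : A ⟶ B of C|v
    (∀ {A B : C} (f : A ⊗ V ⟶ B),
      restrictComp u (TuMap T str u (A ◁ m ≫ f)) (restrictId u (T.obj B)) =
        restrictComp u (restrictId u (T.obj A)) (T.obj A ◁ m ≫ TuMap T str v f)) ∧
    -- compatibility with the units
    (∀ A : C, restrictComp u (etaU T u A) (restrictId u (T.obj A)) = A ◁ m ≫ etaU T v A) ∧
    -- compatibility with the multiplications
    (∀ A : C, restrictComp u (muU T u A) (restrictId u (T.obj A)) =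
      restrictComp u
        (restrictComp u (TuMap T str u (restrictId u (T.obj A))) (restrictId u (T.obj (T.obj A))))
        (T.obj (T.obj A) ◁ m ≫ muU T v A)) := by
  have hu : IsCentralIdempotent u := ⟨hcu, inferInstance⟩
  have hv : IsCentralIdempotent v := ⟨hcv, inferInstance⟩
  have hI : IsCentralIdempotent (𝟙 (𝟙_ C)) := by
    constructor
    · simp [unitors_equal]
    · simp only [MonoidalCategory.whiskerLeft_id, Category.id_comp]
      infer_instance
  have heta : ∀ A : C, etaU T u A = A ◁ m ≫ etaU T v A := by
    intro A
    simp only [etaU, hm, MonoidalCategory.tensorHom_def, MonoidalCategory.whiskerLeft_comp, Category.assoc,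
      whisker_exchange_assoc]
  have hmu : ∀ A : C, muU T u A = T.obj (T.obj A) ◁ m ≫ muU T v A := by
    intro A
    simp only [muU, hm, MonoidalCategory.tensorHom_def, MonoidalCategory.whiskerLeft_comp, Category.assoc,
      whisker_exchange_assoc]
  refine ⟨?_, ?_, ?_⟩
  · intro A B f
    rw [comp_id_right, comp_id_left u hcu]
    have h := h5 u v m hu hv hm A
    rw [TuMap, TuMap, Functor.map_comp, reassoc_of% h]
  · intro A
    rw [comp_id_right, heta]
  · intro A
    rw [comp_id_right, comp_id_right]
    have hg : TuMap T str u (restrictId u (T.obj A)) = restrictId u (T.obj (T.obj A)) := by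
      have h := h5 u (𝟙 (𝟙_ C)) u hu hI (by simp) (T.obj A)
      rw [TuMap, restrictId, Functor.map_comp, ← reassoc_of% h, h1, restrictId]
    rw [hg, comp_id_left u hcu, hmu]
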